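/- For K ≥ 1 and t ∈ (0, t0] with t0 = (e-1)/(e+1), log((1 + t^(1/K))/(1 - t^(1/K))) ≤ K·(log((1+t)/(1-t)))^(1/K). -/

import Mathlib

open Real

/-- `x ↦ e^{-x}(1+x)` is antitone on `[0,∞)`. -/
lemma aux_mono {a b : ℝ} (ha : 0 ≤ a) (hab : a ≤ b) :
    Real.exp (-b) * (1 + b) ≤ Real.exp (-a) * (1 + a) := by
  have h1 : (b - a) + 1 ≤ Real.exp (b - a) := Real.add_one_le_exp _
  have h2 : (1 + b) ≤ Real.exp (b - a) * (1 + a) := by nlinarith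
  have h3 : Real.exp (-b) * Real.exp (b - a) = Real.exp (-a) := by
    rw [← Real.exp_add]; ring_nf
  have hb := Real.exp_pos (-b)
  calc Real.exp (-b) * (1 + b) ≤ Real.exp (-b) * (Real.exp (b - a) * (1 + a)) := by nlinarith
    _ = Real.exp (-a) * (1 + a) := by rw [← mul_assoc, h3]

/-- `2 s ≤ 2^s` for `s ≤ 1`. -/
lemma aux_two_pow {s : ℝ} (hs : s ≤ 1) : 2 * s ≤ Real.exp (s * Real.log 2) := by
  have h1 : ((s - 1) * Real.log 2) + 1 ≤ Real.exp ((s - 1) * Real.log 2) := Real.add_one_le_exp _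
  have h2 : Real.exp (s * Real.log 2) = 2 * Real.exp ((s - 1) * Real.log 2) := by
    rw [show s * Real.log 2 = Real.log 2 + (s - 1) * Real.log 2 by ring, Real.exp_add,
      Real.exp_log (by norm_num : (0:ℝ) < 2)]
  have h3 : Real.log 2 ≤ 1 := by
    have := Real.log_two_lt_d9; linarith
  have h4 : 0 < Real.log 2 := Real.log_pos (by norm_num)
  nlinarith

/-- Polynomial lower bound for `e^{2y}`. -/
lemma aux_exp_poly {y : ℝ} (hy : 0 ≤ y) :
    1 + 2*y + 2*y^2 + (4/3)*y^3 + (2/3)*y^4 ≤ Real.exp (2*y) := by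
  have h := Real.sum_le_exp_of_nonneg (by linarith : (0:ℝ) ≤ 2*y) 5
  have : ∑ i ∈ Finset.range 5, (2*y) ^ i / (Nat.factorial i) =
      1 + 2*y + 2*y^2 + (4/3)*y^3 + (2/3)*y^4 := by
    simp [Finset.sum_range_succ, Nat.factorial]
    ring
  linarith [this ▸ h]

/-- The key one-variable inequality. -/
lemma aux_dagger {y m : ℝ} (hy : 0 < y) (hm0 : 0 ≤ m) (hm1 : m ≤ 0.694)
    (hm2 : m ≤ 0.925 * y) : y ≤ (1 - Real.exp (-(2*y))) * (1 + y - m) := by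
  set P : ℝ := 1 + 2*y + 2*y^2 + (4/3)*y^3 + (2/3)*y^4 with hP
  have hP1 : 1 < P := by
    rw [hP]; nlinarith [sq_nonneg y, pow_pos hy 3, pow_pos hy 4]
  have hP0 : 0 < P := by linarith
  have hPe : P ≤ Real.exp (2*y) := aux_exp_poly hy.le
  have hwe : Real.exp (-(2*y)) ≤ P⁻¹ := by
    rw [Real.exp_neg]
    exact inv_anti₀ hP0 hPe
  have h2 : (0:ℝ) < 1 + y - m := by nlinarith
  have h3 : 1 - P⁻¹ ≤ 1 - Real.exp (-(2*y)) := by linarith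
  have hE : 0 ≤ (P - 1) * (1 + y - m) - y * P := by
    rw [hP]
    nlinarith [mul_nonneg (sub_nonneg.2 hm2) (by linarith : (0:ℝ) ≤ 1 - m),
      mul_nonneg hm0 (by linarith : (0:ℝ) ≤ 0.694 - m),
      mul_nonneg (by linarith : (0:ℝ) ≤ 1 - m) (sq_nonneg y),
      mul_nonneg (by linarith : (0:ℝ) ≤ 1 - m) (mul_nonneg (sq_nonneg y) hy.le)]
  have h4 : y ≤ (1 - P⁻¹) * (1 + y - m) := by
    rw [← sub_nonneg]
    have heq : (1 - P⁻¹) * (1 + y - m) - y = ((P - 1) * (1 + y - m) - y * P) / P := by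
      field_simp
    rw [heq]
    exact div_nonneg hE hP0.le
  calc y ≤ (1 - P⁻¹) * (1 + y - m) := h4
    _ ≤ (1 - Real.exp (-(2*y))) * (1 + y - m) :=
        mul_le_mul_of_nonneg_right h3 h2.le

/-- The key two-variable inequality controlling the derivative. -/
lemma aux_key {s y x : ℝ} (hs0 : 0 < s) (hs1 : s ≤ 1) (hy : 3/4 * s ≤ y)
    (hx0 : 0 ≤ x) (hx1 : x ≤ y - s * Real.log 2) :
    2 * s * y * Real.exp (-y) ≤ Real.exp (-x) * (1 + x) * (1 - Real.exp (-y) ^ 2) := by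
  have hl2 : Real.log 2 < 0.6931472 := lt_trans Real.log_two_lt_d9 (by norm_num)
  have hl2' : 0 < Real.log 2 := Real.log_pos (by norm_num)
  have hy0 : 0 < y := lt_of_lt_of_le (by linarith) hy
  set m : ℝ := s * Real.log 2 with hm
  have hm0 : 0 ≤ m := by positivity
  have hm1 : m ≤ 0.694 := by nlinarith
  have hm2 : m ≤ 0.925 * y := by nlinarith
  have hx'0 : 0 ≤ y - m := by linarith
  -- step 1: antitone
  have h1 : Real.exp (-(y - m)) * (1 + (y - m)) ≤ Real.exp (-x) * (1 + x) :=
    aux_mono hx0 hx1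
  -- step 2: rewrite exp(-(y-m))
  have h2 : Real.exp (-(y - m)) = Real.exp (-y) * Real.exp m := by
    rw [← Real.exp_add]; ring_nf
  -- step 3: 2s ≤ exp m
  have h3 : 2 * s ≤ Real.exp m := aux_two_pow hs1
  -- step 4: dagger
  have h4 : y ≤ (1 - Real.exp (-(2*y))) * (1 + y - m) := aux_dagger hy0 hm0 hm1 hm2
  -- assemble
  have hw : Real.exp (-y) ^ 2 = Real.exp (-(2*y)) := by
    rw [pow_two, ← Real.exp_add]; ring_nf
  have hwpos : 0 < Real.exp (-y) := Real.exp_pos _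
  have hwlt : Real.exp (-y) < 1 := by
    rw [Real.exp_lt_one_iff]; linarith
  have hsq : 0 ≤ 1 - Real.exp (-y) ^ 2 := by nlinarith
  have h1ym : 0 ≤ 1 + y - m := by linarith
  calc 2 * s * y * Real.exp (-y)
      ≤ 2 * s * ((1 - Real.exp (-(2*y))) * (1 + y - m)) * Real.exp (-y) := by
        have := mul_le_mul_of_nonneg_left h4 (by positivity : (0:ℝ) ≤ 2 * s)
        exact mul_le_mul_of_nonneg_right this hwpos.le
    _ = (Real.exp (-y) * (2 * s)) * (1 + (y - m)) * (1 - Real.exp (-y) ^ 2) := by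
        rw [hw]; ring
    _ ≤ (Real.exp (-y) * Real.exp m) * (1 + (y - m)) * (1 - Real.exp (-y) ^ 2) := by
        apply mul_le_mul_of_nonneg_right _ hsq
        apply mul_le_mul_of_nonneg_right _ (by linarith)
        exact mul_le_mul_of_nonneg_left h3 hwpos.le
    _ = Real.exp (-(y - m)) * (1 + (y - m)) * (1 - Real.exp (-y) ^ 2) := by rw [h2]
    _ ≤ Real.exp (-x) * (1 + x) * (1 - Real.exp (-y) ^ 2) :=
        mul_le_mul_of_nonneg_right h1 hsq


lemma aux_alg (E W s B L : ℝ) (hs : s ≠ 0) (h1 : 1 + W ≠ 0) (h2 : 1 - W ≠ 0) :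
    -(E * (1 + s * B)) / s ^ 2 + 2 * L * W / (1 - W ^ 2)
      = (E * -B * s - E * 1) / s ^ 2 - W * -L / (1 + W) + -(W * -L) / (1 - W) := by
  have h3 : 1 - W ^ 2 ≠ 0 := by
    intro h
    rcases mul_eq_zero.1 (show (1 + W) * (1 - W) = 0 by nlinarith) with h' | h'
    · exact h1 h'
    · exact h2 h'
  field_simp
  ring


set_option maxHeartbeats 2000000 in
theorem stmt_9 (K t : ℝ) (hK : 1 ≤ K)
    (ht : t ∈ Set.Ioc 0 ((Real.exp 1 - 1) / (Real.exp 1 + 1))) :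
    Real.log ((1 + t ^ (1 / K)) / (1 - t ^ (1 / K))) ≤
      K * (Real.log ((1 + t) / (1 - t))) ^ (1 / K) := by
  obtain ⟨ht0, htu⟩ := ht
  have he1 : (2.7182818283 : ℝ) < Real.exp 1 := by
    have := Real.exp_one_gt_d9; linarith
  have he2 : Real.exp 1 < 2.7182818286 := Real.exp_one_lt_d9
  have hep : (0:ℝ) < Real.exp 1 + 1 := by linarith
  have htu' : t * (Real.exp 1 + 1) ≤ Real.exp 1 - 1 := by
    rwa [le_div_iff₀ hep] at htu
  have ht5 : t ≤ 1/2 := by nlinarith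
  have h1t : (0:ℝ) < 1 - t := by linarith
  set A := Real.log ((1 + t) / (1 - t)) with hA
  have hfrac1 : (1:ℝ) < (1 + t) / (1 - t) := by
    rw [lt_div_iff₀ h1t]; linarith
  have hA0 : 0 < A := Real.log_pos hfrac1
  -- A ≤ 1
  have hfe : (1 + t) / (1 - t) ≤ Real.exp 1 := by
    rw [div_le_iff₀ h1t]; nlinarith
  have hA1 : A ≤ 1 := by
    calc A ≤ Real.log (Real.exp 1) := (Real.log_le_log_iff (by linarith) (Real.exp_pos 1)).2 hfe
      _ = 1 := Real.log_exp 1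
  -- A ≥ 2t
  have habs : |2*t| ≤ 1 := by rw [abs_of_nonneg (by linarith)]; linarith
  have hexpb := Real.exp_bound habs (n := 4) (by norm_num)
  have hsum : ∑ i ∈ Finset.range 4, (2*t) ^ i / (Nat.factorial i)
      = 1 + 2*t + 2*t^2 + (4/3)*t^3 := by
    simp [Finset.sum_range_succ, Nat.factorial]; ring
  rw [hsum, abs_of_nonneg (by linarith : (0:ℝ) ≤ 2*t)] at hexpb
  have hexp2t : Real.exp (2*t) ≤ 1 + 2*t + 2*t^2 + (4/3)*t^3 + (5/6)*t^4 := by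
    have h2 := (abs_le.1 hexpb).2
    have heq : (2*t)^4 * ((Nat.succ 4) / ((Nat.factorial 4) * (4:ℕ)) : ℝ) = (5/6)*t^4 := by
      norm_num [Nat.factorial]; ring
    rw [heq] at h2
    linarith
  have hfe2 : Real.exp (2*t) ≤ (1 + t) / (1 - t) := by
    rw [le_div_iff₀ h1t]
    nlinarith [pow_nonneg ht0.le 3, pow_nonneg ht0.le 4, pow_nonneg ht0.le 5,
      mul_nonneg (pow_nonneg ht0.le 4) ht0.le]
  have hA2 : 2*t ≤ A := by
    calc 2*t = Real.log (Real.exp (2*t)) := (Real.log_exp _).symm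
      _ ≤ A := (Real.log_le_log_iff (Real.exp_pos _) (by linarith)).2 hfe2
  -- log t ≤ -3/4
  have hq4 : Real.exp (3/4) ^ 4 = Real.exp 3 := by
    rw [← Real.exp_nat_mul]; norm_num
  have hqpos := Real.exp_pos (3/4 : ℝ)
  have he3 : Real.exp 3 ≤ 20.0856 := by
    have h3 : Real.exp 3 = Real.exp 1 ^ 3 := by rw [← Real.exp_nat_mul]; norm_num
    rw [h3]
    nlinarith [Real.exp_pos 1, mul_pos (Real.exp_pos 1) (Real.exp_pos 1),
      mul_pos (sub_pos.2 he2) (mul_pos (Real.exp_pos 1) (Real.exp_pos 1)),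
      mul_pos (sub_pos.2 he2) (Real.exp_pos 1)]
  have hq : Real.exp (3/4) ≤ 2.12 := by
    nlinarith [hq4, sq_nonneg (Real.exp (3/4) ^ 2 - 4.4944), sq_nonneg (Real.exp (3/4) - 2.12)]
  have htq : t ≤ Real.exp (-(3/4)) := by
    have hprod : (Real.exp 1 - 1) * Real.exp (3/4) ≤ 1.7182818286 * 2.12 := by
      apply mul_le_mul (by linarith) hq hqpos.le (by norm_num)
    have h5 : (Real.exp 1 - 1) / (Real.exp 1 + 1) ≤ Real.exp (-(3/4)) := by
      rw [Real.exp_neg, ← one_div, div_le_div_iff₀ hep hqpos]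
      nlinarith
    linarith
  have hlt : Real.log t ≤ -(3/4) := by
    calc Real.log t ≤ Real.log (Real.exp (-(3/4))) :=
          (Real.log_le_log_iff ht0 (Real.exp_pos _)).2 htq
      _ = -(3/4) := Real.log_exp _
  -- set up B, L, s
  set B := -Real.log A with hB
  set L := -Real.log t with hL
  have hB0 : 0 ≤ B := by
    have := Real.log_nonpos hA0.le hA1
    rw [hB]; linarith
  have hL34 : 3/4 ≤ L := by rw [hL]; linarith
  have hBL : B ≤ L - Real.log 2 := by
    have h2t : Real.log (2*t) ≤ Real.log A := (Real.log_le_log_iff (by linarith) hA0).2 hA2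
    rw [Real.log_mul (by norm_num) (ne_of_gt ht0)] at h2t
    rw [hB, hL]; linarith
  have hK0 : 0 < K := by linarith
  set s := 1/K with hs
  have hs0 : 0 < s := by positivity
  have hs1 : s ≤ 1 := by rw [hs, div_le_one hK0]; linarith
  -- the function g and its derivative D
  set g : ℝ → ℝ := fun σ => Real.exp (σ * -B) / σ - Real.log (1 + Real.exp (σ * -L))
      + Real.log (1 - Real.exp (σ * -L)) with hg
  set D : ℝ → ℝ := fun σ => -(Real.exp (σ * -B) * (1 + σ * B)) / σ ^ 2
      + 2 * L * Real.exp (σ * -L) / (1 - Real.exp (σ * -L) ^ 2) with hD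
  have hwlt : ∀ σ : ℝ, 0 < σ → Real.exp (σ * -L) < 1 := by
    intro σ hσ
    rw [Real.exp_lt_one_iff]
    nlinarith [mul_pos hσ (lt_of_lt_of_le (by norm_num : (0:ℝ) < 3/4) hL34)]
  have HD : ∀ σ : ℝ, 0 < σ → HasDerivAt g (D σ) σ := by
    intro σ hσ
    have hwpos := Real.exp_pos (σ * -L)
    have hw1 := hwlt σ hσ
    have e1 : HasDerivAt (fun σ : ℝ => σ * -B) (-B) σ := hasDerivAt_mul_const _
    have e2 := e1.exp
    have e3 := e2.div (hasDerivAt_id σ) (ne_of_gt hσ)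
    have e4 : HasDerivAt (fun σ : ℝ => σ * -L) (-L) σ := hasDerivAt_mul_const _
    have e5 := e4.exp
    have e6 := (e5.const_add 1).log (by positivity)
    have e7 := (e5.const_sub 1).log (ne_of_gt (by linarith : (0:ℝ) < 1 - Real.exp (σ * -L)))
    have e8 := (e3.sub e6).add e7
    have hne1 : (1:ℝ) + Real.exp (σ * -L) ≠ 0 := by positivity
    have hne2 : (1:ℝ) - Real.exp (σ * -L) ≠ 0 := ne_of_gt (by linarith)
    refine HasDerivAt.congr_deriv e8 (Eq.symm ?_)
    simp only [hD, id_eq]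
    exact aux_alg _ _ _ _ _ (ne_of_gt hσ) hne1 hne2
  -- D is nonpositive on (0,1]
  have hDnp : ∀ σ : ℝ, 0 < σ → σ ≤ 1 → D σ ≤ 0 := by
    intro σ h0 h1
    have hLpos : (0:ℝ) < L := by linarith
    have key := aux_key (s := σ) (y := σ * L) (x := σ * B) h0 h1
      (by nlinarith) (by positivity)
      (by nlinarith [mul_le_mul_of_nonneg_left hBL h0.le])
    have hyL : -(σ * L) = σ * -L := by ring
    rw [hyL] at key
    have hxB : -(σ * B) = σ * -B := by ring
    rw [hxB] at key
    have hw1 := hwlt σ h0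
    have hwpos := Real.exp_pos (σ * -L)
    have hw2 : (0:ℝ) < 1 - Real.exp (σ * -L) ^ 2 := by nlinarith
    simp only [hD]
    have hσ2 : (0:ℝ) < σ ^ 2 := by positivity
    have hdiv : 2 * L * Real.exp (σ * -L) / (1 - Real.exp (σ * -L) ^ 2)
        ≤ Real.exp (σ * -B) * (1 + σ * B) / σ ^ 2 := by
      rw [div_le_div_iff₀ hw2 hσ2]
      nlinarith [key]
    have h2 : -(Real.exp (σ * -B) * (1 + σ * B)) / σ ^ 2
        = -(Real.exp (σ * -B) * (1 + σ * B) / σ ^ 2) := by ring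
    rw [h2]
    linarith
  -- antitone
  have hanti : AntitoneOn g (Set.Icc s 1) := by
    apply antitoneOn_of_deriv_nonpos (convex_Icc s 1)
    · intro σ hσ
      exact ((HD σ (lt_of_lt_of_le hs0 hσ.1)).differentiableAt.continuousAt).continuousWithinAt
    · intro σ hσ
      rw [interior_Icc] at hσ
      exact ((HD σ (lt_trans hs0 hσ.1)).differentiableAt).differentiableWithinAt
    · intro σ hσ
      rw [interior_Icc] at hσ
      rw [(HD σ (lt_trans hs0 hσ.1)).deriv]
      exact hDnp σ (lt_trans hs0 hσ.1) hσ.2.le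
  have hgs : g 1 ≤ g s := hanti ⟨le_rfl, hs1⟩ ⟨hs1, le_rfl⟩ hs1
  -- g 1 = 0
  have hg1 : g 1 = 0 := by
    simp only [hg, one_mul]
    have hb1 : Real.exp (-B) = A := by rw [hB, neg_neg, Real.exp_log hA0]
    have hl1 : Real.exp (-L) = t := by rw [hL, neg_neg, Real.exp_log ht0]
    rw [hb1, hl1, hA]
    rw [Real.log_div (by linarith : (1:ℝ) + t ≠ 0) (ne_of_gt h1t)]
    ring
  -- unfold g s and conclude
  have hts : t ^ (1/K) = Real.exp (s * -L) := by
    rw [Real.rpow_def_of_pos ht0]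
    congr 1
    rw [hs, hL]; ring
  have hAs : A ^ (1/K) = Real.exp (s * -B) := by
    rw [Real.rpow_def_of_pos hA0]
    congr 1
    rw [hs, hB]; ring
  have hu1 : Real.exp (s * -L) < 1 := hwlt s hs0
  have hu0 : (0:ℝ) < Real.exp (s * -L) := Real.exp_pos _
  rw [hts, hAs]
  rw [Real.log_div (by positivity) (ne_of_gt (by linarith : (0:ℝ) < 1 - Real.exp (s * -L)))]
  have hKs : K * Real.exp (s * -B) = Real.exp (s * -B) / s := by
    rw [hs]; field_simp
  rw [hKs]
  have hgs' : (0:ℝ) ≤ g s := hg1 ▸ hgs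
  simp only [hg] at hgs'
  linarith
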